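/- Let P_n ∈ ℤ[t] satisfy Keel's recurrence P_3 = 1, P_{n+1} = (1+t)·P_n + (t/2)·∑_{j=2}^{n-2} C(n,j)·P_{j+1}·P_{n-j+1}. Then for every n ≥ 4, the coefficient of t^{n-4} in P_n equals the coefficient of t in P_n, which equals 2^{n-1} − C(n,2) − 1. -/

import Mathlib

open Polynomial Finset

lemma binom_sum (n : ℕ) (hn : 4 ≤ n) :
    ∑ j ∈ Icc 2 (n-2), (n.choose j : ℚ) = 2^n - 2*n - 2 := by
  have h1 : ∑ j ∈ Icc 0 n, (n.choose j : ℚ) = 2^n := by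
    rw [← Finset.Ico_add_one_right_eq_Icc, ← Finset.range_eq_Ico]
    exact_mod_cast congrArg (Nat.cast : ℕ → ℚ) (Nat.sum_range_choose n)
  have hsub : Icc 2 (n-2) ⊆ Icc 0 n := by
    intro x hx; simp only [mem_Icc] at *; omega
  have hsd : Icc 0 n \ Icc 2 (n-2) = {0, 1, n-1, n} := by
    ext x
    simp only [mem_sdiff, mem_Icc, mem_insert, mem_singleton]
    omega
  have hT := Finset.sum_sdiff (f := fun j => (n.choose j : ℚ)) hsub
  rw [hsd] at hT
  have hsum4 : ∑ j ∈ ({0, 1, n-1, n} : Finset ℕ), (n.choose j : ℚ) = 2*n + 2 := by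
    rw [show ({0, 1, n-1, n} : Finset ℕ) = insert 0 (insert 1 (insert (n-1) {n})) from rfl]
    rw [Finset.sum_insert (by simp [mem_insert]; omega),
        Finset.sum_insert (by simp [mem_insert]; omega),
        Finset.sum_insert (by simp; omega), Finset.sum_singleton]
    have h1 : n.choose (n-1) = n := by
      rw [Nat.choose_symm (by omega), Nat.choose_one_right]
    simp [h1, Nat.choose_one_right]
    ring
  linarith [hT, hsum4]

lemma coeff_comb (p s : ℚ[X]) (k : ℕ) (hk : 1 ≤ k) :
    ((1+X)*p + C (1/2:ℚ)*X*s).coeff k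
      = p.coeff k + p.coeff (k-1) + (1/2) * s.coeff (k-1) := by
  obtain ⟨l, rfl⟩ : ∃ l, k = l + 1 := ⟨k-1, by omega⟩
  simp [add_mul, coeff_add, coeff_X_mul, mul_assoc, coeff_C_mul]

lemma coeff_comb0 (p s : ℚ[X]) :
    ((1+X)*p + C (1/2:ℚ)*X*s).coeff 0 = p.coeff 0 := by
  simp [add_mul, coeff_add, mul_assoc, mul_coeff_zero, coeff_X_zero]

lemma keel_inv (P : ℕ → Polynomial ℚ) (h3 : P 3 = 1)
    (hrec : ∀ n, 3 ≤ n → P (n + 1) = (1 + X) * P n +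
      C (1/2 : ℚ) * X * ∑ j ∈ Icc 2 (n - 2),
        (n.choose j : Polynomial ℚ) * P (j + 1) * P (n - j + 1)) :
    ∀ n, 3 ≤ n → (P n).natDegree = n-3 ∧ (P n).coeff 0 = 1 ∧ (P n).coeff (n-3) = 1 ∧
      (P n).coeff 1 = 2^(n-1) - (n.choose 2 : ℚ) - 1 ∧
      (4 ≤ n → (P n).coeff (n-4) = 2^(n-1) - (n.choose 2 : ℚ) - 1) := by
  intro n
  induction n using Nat.strong_induction_on with
  | _ n IH =>
  intro hn
  rcases Nat.lt_or_ge n 5 with h5 | h5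
  · interval_cases n
    · -- n = 3
      norm_num [h3, coeff_one]
    · -- n = 4
      have h4 : P 4 = 1 + X := by
        have := hrec 3 le_rfl
        rw [show Icc 2 (3-2) = (∅ : Finset ℕ) from rfl] at this
        simp [h3] at this
        simpa using this
      refine ⟨?_, ?_, ?_, ?_, ?_⟩ <;> norm_num [h4, coeff_one, coeff_add, Nat.choose]
      rw [add_comm]; exact natDegree_X_add_C 1
  · -- n ≥ 5
    obtain ⟨m, rfl⟩ : ∃ m, n = m + 1 := ⟨n-1, by omega⟩
    have hm4 : 4 ≤ m := by omega
    obtain ⟨hdm, h0m, htm, h1m, h4m⟩ := IH m (by omega) (by omega)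
    have h4m := h4m hm4
    have hP := hrec m (by omega)
    set S := ∑ j ∈ Icc 2 (m-2), (m.choose j : ℚ[X]) * P (j+1) * P (m-j+1) with hSdef
    -- coefficient 0 of S
    have hS0 : S.coeff 0 = 2^m - 2*m - 2 := by
      rw [hSdef, finset_sum_coeff]
      rw [Finset.sum_congr rfl (fun j hj => ?_), binom_sum m hm4]
      simp only [mem_Icc] at hj
      have e1 := (IH (j+1) (by omega) (by omega)).2.1
      have e2 := (IH (m-j+1) (by omega) (by omega)).2.1
      rw [mul_assoc, ← C_eq_natCast, coeff_C_mul, mul_coeff_zero, e1, e2, mul_one, mul_one]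
    -- top coefficient of S
    have hStop : S.coeff (m-4) = 2^m - 2*m - 2 := by
      rw [hSdef, finset_sum_coeff]
      rw [Finset.sum_congr rfl (fun j hj => ?_), binom_sum m hm4]
      simp only [mem_Icc] at hj
      have d1 := (IH (j+1) (by omega) (by omega)).1
      have d2 := (IH (m-j+1) (by omega) (by omega)).1
      have t1 := (IH (j+1) (by omega) (by omega)).2.2.1
      have t2 := (IH (m-j+1) (by omega) (by omega)).2.2.1
      rw [mul_assoc, ← C_eq_natCast, coeff_C_mul,
        show m - 4 = (P (j+1)).natDegree + (P (m-j+1)).natDegree by rw [d1, d2]; omega,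
        coeff_mul_degree_add_degree, leadingCoeff, leadingCoeff, d1, d2, t1, t2, mul_one, mul_one]
    -- degree bound of S
    have hSdeg : S.natDegree ≤ m - 4 := by
      rw [hSdef]
      apply natDegree_sum_le_of_forall_le
      intro j hj
      simp only [mem_Icc] at hj
      have d1 := (IH (j+1) (by omega) (by omega)).1
      have d2 := (IH (m-j+1) (by omega) (by omega)).1
      calc ((m.choose j : ℚ[X]) * P (j+1) * P (m-j+1)).natDegree
          ≤ ((m.choose j : ℚ[X]) * P (j+1)).natDegree + (P (m-j+1)).natDegree :=
            natDegree_mul_le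
        _ ≤ ((m.choose j : ℚ[X]).natDegree + (P (j+1)).natDegree) + (P (m-j+1)).natDegree :=
            Nat.add_le_add_right natDegree_mul_le _
        _ ≤ m - 4 := by rw [natDegree_natCast, d1, d2]; omega
    -- arithmetic helpers
    have hpow : (2:ℚ)^m = 2^(m-1)*2 := by
      rw [← pow_succ]; congr 1; omega
    have hch : (((m+1).choose 2 : ℕ) : ℚ) = (m.choose 2 : ℚ) + m := by
      rw [Nat.choose_succ_succ m 1, Nat.choose_one_right]
      push_cast; ring
    -- second coefficient
    have hc1 : (P (m+1)).coeff 1 = 2^m - ((m+1).choose 2 : ℚ) - 1 := by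
      rw [hP, coeff_comb _ _ 1 le_rfl]
      norm_num
      rw [h1m, h0m, hS0, hch]
      linarith [hpow]
    -- top coefficient
    have hct : (P (m+1)).coeff (m-2) = 1 := by
      rw [hP, coeff_comb _ _ (m-2) (by omega)]
      rw [coeff_eq_zero_of_natDegree_lt (by rw [hdm]; omega),
        show m-2-1 = m-3 by omega, htm,
        coeff_eq_zero_of_natDegree_lt (lt_of_le_of_lt hSdeg (by omega))]
      ring
    -- second-from-top coefficient
    have hcst : (P (m+1)).coeff (m-3) = 2^m - ((m+1).choose 2 : ℚ) - 1 := by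
      rw [hP, coeff_comb _ _ (m-3) (by omega), htm, show m-3-1 = m-4 by omega, h4m, hStop, hch]
      linarith [hpow]
    -- coefficient 0
    have hc0 : (P (m+1)).coeff 0 = 1 := by rw [hP, coeff_comb0, h0m]
    -- degree
    have hdeg : (P (m+1)).natDegree = m - 2 := by
      refine le_antisymm ?_ ?_
      · rw [hP]
        refine (natDegree_add_le _ _).trans (max_le ?_ ?_)
        · refine natDegree_mul_le.trans ?_
          have : (1 + X : ℚ[X]).natDegree ≤ 1 :=
            (natDegree_add_le _ _).trans (by simp)
          omega
        · refine natDegree_mul_le.trans ?_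
          have h1 : (C (1/2:ℚ) * X).natDegree ≤ 1 :=
            natDegree_mul_le.trans (by simp)
          omega
      · exact le_natDegree_of_ne_zero (by rw [hct]; norm_num)
    refine ⟨?_, hc0, ?_, ?_, fun _ => ?_⟩
    · rwa [show m+1-3 = m-2 from by omega]
    · rwa [show m+1-3 = m-2 from by omega]
    · rwa [show m+1-1 = m from by omega]
    · rw [show m+1-4 = m-3 from by omega, show m+1-1 = m from by omega]
      exact hcst

theorem keel_second_betti (P : ℕ → Polynomial ℚ) (h3 : P 3 = 1)
    (hrec : ∀ n, 3 ≤ n → P (n + 1) = (1 + X) * P n +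
      C (1/2 : ℚ) * X * ∑ j ∈ Icc 2 (n - 2),
        (n.choose j : Polynomial ℚ) * P (j + 1) * P (n - j + 1)) :
    ∀ n, 4 ≤ n → (P n).coeff (n - 4) = (P n).coeff 1 ∧
      (P n).coeff 1 = 2 ^ (n - 1) - (n.choose 2 : ℚ) - 1 := by
  intro n hn
  obtain ⟨-, -, -, h1, h4⟩ := keel_inv P h3 hrec n (by omega)
  exact ⟨by rw [h4 hn, h1], h1⟩
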